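/- Let M = (m_1,...,m_k) be a super-increasing tuple of positive integers with m_k ≥ 2, and let I and J be distinct allowable sub-tuples for M. Then n⁺(M_I) − n⁻(M_I) ≠ n⁺(M_J) − n⁻(M_J). -/

import Mathlib

/-- Continued fraction value of a list of rationals:
`cf [n₁,...,n_k] = 1/(n₁ + 1/(n₂ + ... + 1/n_k))`. -/
def cf : List ℚ → ℚ
  | [] => 0
  | n :: L => 1 / (n + cf L)

/-- The alternating sequence `-2, 2, -2, 2, ..., ±2` of length `n`. -/
def altSeq (n : ℕ) : List ℤ :=
  (List.range n).map (fun j => (-1 : ℤ) ^ (j + 1) * 2)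

/-- The `i`-th entry (1-based) of the tuple `M`. -/
def ent (M : List ℕ) (i : ℕ) : ℕ := M.getD (i - 1) 0

/-- `I` is an allowable sub-tuple for the tuple `M` of positive integers:
a strictly increasing tuple of indices in `{1,...,k}` with consecutive
gaps at least 2, such that for every index `i` with `m_i = 1` at least
one of `i-1, i, i+1` belongs to `I`. -/
def IsAllowable (M : List ℕ) (I : List ℕ) : Prop :=
  I.Chain' (fun a b => a + 2 ≤ b) ∧
  (∀ i ∈ I, 1 ≤ i ∧ i ≤ M.length) ∧
  (∀ i, 1 ≤ i → i ≤ M.length → ent M i = 1 → (i - 1 ∈ I ∨ i ∈ I ∨ i + 1 ∈ I))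

/-- The sign `∏_{i' ∈ I, i' < i} (-1)^(m_{i'})` adjusting the entries coming
from position `i` of `M`. -/
def subSign (M : List ℕ) (I : List ℕ) (i : ℕ) : ℤ :=
  ((I.filter (fun i' => decide (i' < i))).map (fun i' => (-1 : ℤ) ^ ent M i')).prod

/-- Before sign adjustment, the block of entries of `M_I` coming from position `i`
of `M`: either the alternating sequence `-2,2,...,±2` of length `m_i - 1`
(if `i ∈ I`), or the single entry `m_i` increased by 1 for each neighbor of `i`
lying in `I`. -/
def block (M : List ℕ) (I : List ℕ) (i : ℕ) : List ℤ :=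
  if i ∈ I then altSeq (ent M i - 1)
  else [(ent M i : ℤ) + (if i - 1 ∈ I then 1 else 0) + (if i + 1 ∈ I then 1 else 0)]

/-- The continued fraction expansion `M_I` associated to an allowable sub-tuple `I`
of `M`. -/
def MI (M : List ℕ) (I : List ℕ) : List ℤ :=
  ((List.range M.length).map (fun idx =>
    (block M I (idx + 1)).map (fun q => subSign M I (idx + 1) * q))).flatten

/-- `n⁺(N) = #{i : (-1)^(i+1) n_i > 0}` (1-based `i`). -/
def nplus (N : List ℤ) : ℕ :=
  ((List.range N.length).filter
    (fun idx => decide (0 < (-1 : ℤ) ^ idx * N.getD idx 0))).length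

/-- `n⁻(N) = #{i : (-1)^(i+1) n_i < 0}` (1-based `i`). -/
def nminus (N : List ℤ) : ℕ :=
  ((List.range N.length).filter
    (fun idx => decide ((-1 : ℤ) ^ idx * N.getD idx 0 < 0))).length

/-- `Σ_{i ∈ I} (-1)^i m_i`. -/
def sgnSum (M : List ℕ) (I : List ℕ) : ℤ :=
  (I.map (fun i => (-1 : ℤ) ^ i * (ent M i : ℤ))).sum

/-- The dual sub-tuple `(k+1-i_j, ..., k+1-i_1)` of `I = (i_1,...,i_j)`. -/
def dualSub (k : ℕ) (I : List ℕ) : List ℕ :=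
  (I.map (fun i => k + 1 - i)).reverse

/-- `(m_1,...,m_k)` is super-increasing if `m_i > Σ_{j<i} m_j` for all `i`. -/
def SuperInc (M : List ℕ) : Prop :=
  ∀ i, 1 ≤ i → i ≤ M.length → (M.take (i - 1)).sum < ent M i


def sc : List ℤ → ℤ
  | [] => 0
  | a :: l => Int.sign a - sc l

lemma sc_nil : sc [] = 0 := rfl
lemma sc_cons (a : ℤ) (l : List ℤ) : sc (a :: l) = Int.sign a - sc l := rfl

lemma sc_append (L1 L2 : List ℤ) :
    sc (L1 ++ L2) = sc L1 + (-1) ^ L1.length * sc L2 := by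
  induction L1 with
  | nil => simp [sc_nil]
  | cons a l ih =>
    simp only [List.cons_append, sc_cons, ih, List.length_cons, pow_succ]
    ring

lemma nplus_cons (a : ℤ) (N : List ℤ) :
    nplus (a :: N) = (if 0 < a then 1 else 0) + nminus N := by
  unfold nplus nminus
  rw [List.length_cons, List.range_succ_eq_map, List.filter_cons, List.filter_map]
  have h : ((fun idx => decide (0 < (-1:ℤ)^idx * (a :: N).getD idx 0)) ∘ Nat.succ)
      = (fun idx => decide ((-1:ℤ)^idx * N.getD idx 0 < 0)) := by
    funext idx
    simp only [Function.comp_apply, Nat.succ_eq_add_one]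
    have e : (-1:ℤ)^(idx+1) * (a :: N).getD (idx+1) 0 = -((-1:ℤ)^idx * N.getD idx 0) := by
      rw [List.getD_cons_succ, pow_succ]; ring
    rw [e]
    simp [neg_pos]
  rw [h]
  by_cases ha : 0 < a <;> simp [ha, Nat.add_comm]

lemma nminus_cons (a : ℤ) (N : List ℤ) :
    nminus (a :: N) = (if a < 0 then 1 else 0) + nplus N := by
  unfold nplus nminus
  rw [List.length_cons, List.range_succ_eq_map, List.filter_cons, List.filter_map]
  have h : ((fun idx => decide ((-1:ℤ)^idx * (a :: N).getD idx 0 < 0)) ∘ Nat.succ)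
      = (fun idx => decide (0 < (-1:ℤ)^idx * N.getD idx 0)) := by
    funext idx
    simp only [Function.comp_apply, Nat.succ_eq_add_one]
    have e : (-1:ℤ)^(idx+1) * (a :: N).getD (idx+1) 0 = -((-1:ℤ)^idx * N.getD idx 0) := by
      rw [List.getD_cons_succ, pow_succ]; ring
    rw [e]
    simp
  rw [h]
  by_cases ha : a < 0 <;> simp [ha, Nat.add_comm]

lemma nplus_sub_nminus (N : List ℤ) : (nplus N : ℤ) - nminus N = sc N := by
  induction N with
  | nil => simp [nplus, nminus, sc_nil]
  | cons a l ih =>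
    rw [nplus_cons, nminus_cons, sc_cons, ← ih]
    rcases lt_trichotomy a 0 with h | h | h
    · rw [if_neg (by omega), if_pos h, Int.sign_eq_neg_one_iff_neg.mpr h]
      push_cast; ring
    · subst h; simp only [lt_irrefl, if_neg, Int.sign_zero]
      push_cast; ring
    · rw [if_pos h, if_neg (by omega), Int.sign_eq_one_iff_pos.mpr h]
      push_cast; ring

lemma subSign_eq_or (M I : List ℕ) (i : ℕ) :
    subSign M I i = 1 ∨ subSign M I i = -1 := by
  unfold subSign
  generalize (I.filter (fun i' => decide (i' < i))) = l
  induction l with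
  | nil => left; simp
  | cons a t ih =>
    rw [List.map_cons, List.prod_cons]
    rcases neg_one_pow_eq_or ℤ (ent M a) with h | h <;> rw [h] <;>
      rcases ih with h2 | h2 <;> rw [h2] <;> simp

lemma subSign_mul_self (M I : List ℕ) (i : ℕ) :
    subSign M I i * subSign M I i = 1 := by
  rcases subSign_eq_or M I i with h | h <;> rw [h] <;> ring

lemma prod_filter_succ (f : ℕ → ℤ) (i : ℕ) (l : List ℕ) (hl : l.Nodup) :
    ((l.filter (fun x => decide (x < i + 1))).map f).prod
      = ((l.filter (fun x => decide (x < i))).map f).prod * (if i ∈ l then f i else 1) := by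
  induction l with
  | nil => simp
  | cons a t ih =>
    rw [List.nodup_cons] at hl
    obtain ⟨ha, ht⟩ := hl
    rw [List.filter_cons, List.filter_cons]
    by_cases h1 : a < i
    · rw [if_pos (by simpa using Nat.lt_succ_of_lt h1), if_pos (by simpa using h1)]
      rw [List.map_cons, List.prod_cons, List.map_cons, List.prod_cons, ih ht]
      have hia : ¬ (i = a) := by omega
      by_cases hit : i ∈ t <;> simp [List.mem_cons, hia, hit] <;> ring
    · by_cases h2 : a = i
      · subst h2
        rw [if_pos (by simp), if_neg (by simp)]
        rw [List.map_cons, List.prod_cons, ih ht, if_neg ha]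
        simp [List.mem_cons, ha]
        ring
      · rw [if_neg (by simp; omega), if_neg (by simp; omega), ih ht]
        have hia : ¬ (i = a) := fun h => h2 h.symm
        by_cases hit : i ∈ t <;> simp [List.mem_cons, hia, hit]

lemma subSign_succ (M I : List ℕ) (hI : I.Nodup) (i : ℕ) :
    subSign M I (i + 1)
      = subSign M I i * (if i ∈ I then (-1 : ℤ) ^ ent M i else 1) := by
  unfold subSign
  exact prod_filter_succ _ i I hI

lemma length_altSeq (n : ℕ) : (altSeq n).length = n := by simp [altSeq]

lemma altSeq_succ (n : ℕ) :
    altSeq (n + 1) = altSeq n ++ [(-1 : ℤ) ^ (n + 1) * 2] := by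
  unfold altSeq
  rw [List.range_succ, List.map_append]
  rfl

lemma sign_pm (s : ℤ) (hs : s = 1 ∨ s = -1) : Int.sign s = s := by
  rcases hs with h | h <;> rw [h] <;> rfl

lemma sc_altSeq_mul (s : ℤ) (hs : s = 1 ∨ s = -1) (n : ℕ) :
    sc ((altSeq n).map (fun q => s * q)) = -(n : ℤ) * s := by
  induction n with
  | zero => simp [altSeq, sc_nil]
  | succ n ih =>
    rw [altSeq_succ, List.map_append, sc_append, ih]
    simp only [List.map_cons, List.map_nil, sc_cons, sc_nil, List.length_map, length_altSeq]
    have h1 : Int.sign (s * ((-1 : ℤ) ^ (n + 1) * 2)) = s * (-1) ^ (n + 1) := by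
      rcases hs with h | h <;> rcases neg_one_pow_eq_or ℤ (n + 1) with h2 | h2 <;>
        rw [h, h2] <;> rfl
    rw [h1]
    have h2 : ((-1 : ℤ) ^ n) * ((-1 : ℤ) ^ (n+1)) = -1 := by
      rw [← pow_add]
      exact Odd.neg_one_pow ⟨n, by ring⟩
    push_cast
    linear_combination s * h2

lemma ent_pos (M : List ℕ) (hpos : ∀ m ∈ M, 0 < m) (i : ℕ)
    (h1 : 1 ≤ i) (h2 : i ≤ M.length) : 0 < ent M i := by
  unfold ent
  have hlt : i - 1 < M.length := by omega
  rw [List.getD_eq_getElem M 0 hlt]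
  exact hpos _ (List.getElem_mem hlt)

lemma sc_glue (M I : List ℕ) (hpos : ∀ m ∈ M, 0 < m) (hnd : I.Nodup) :
    ∀ n a, a + n ≤ M.length →
    sc (((List.range n).map (fun idx =>
        (block M I (a + idx + 1)).map (fun q => subSign M I (a + idx + 1) * q))).flatten)
      = subSign M I (a + 1) *
        ((List.range n).map (fun j =>
          (-1 : ℤ) ^ j * (if a + 1 + j ∈ I then 1 - (ent M (a + 1 + j) : ℤ) else 1))).sum := by
  intro n
  induction n with
  | zero => intro a _; simp [sc_nil]
  | succ n ih =>
    intro a hle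
    simp only [List.range_succ_eq_map, List.map_cons, List.flatten_cons,
      List.sum_cons, List.map_map, Nat.add_zero]
    rw [sc_append]
    have e1 : ((fun idx => (block M I (a + idx + 1)).map
          (fun q => subSign M I (a + idx + 1) * q)) ∘ Nat.succ)
        = (fun idx => (block M I (a + 1 + idx + 1)).map
          (fun q => subSign M I (a + 1 + idx + 1) * q)) := by
      funext idx
      simp only [Function.comp_apply, Nat.succ_eq_add_one]
      rw [show a + (idx + 1) + 1 = a + 1 + idx + 1 by omega]
    have e2 : ((fun j => (-1 : ℤ) ^ j *
          (if a + 1 + j ∈ I then 1 - (ent M (a + 1 + j) : ℤ) else 1)) ∘ Nat.succ)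
        = (fun j => (-1 : ℤ) * ((-1 : ℤ) ^ j *
          (if a + 1 + 1 + j ∈ I then 1 - (ent M (a + 1 + 1 + j) : ℤ) else 1))) := by
      funext j
      simp only [Function.comp_apply, Nat.succ_eq_add_one]
      rw [show a + 1 + (j + 1) = a + 1 + 1 + j by omega, pow_succ]
      ring
    rw [e1, e2, List.sum_map_mul_left, ih (a + 1) (by omega)]
    set s1 := subSign M I (a + 1) with hs1
    set S := ((List.range n).map (fun j =>
      (-1 : ℤ) ^ j * (if a + 1 + 1 + j ∈ I then 1 - (ent M (a + 1 + 1 + j) : ℤ) else 1))).sum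
    have hs2 : subSign M I (a + 1 + 1)
        = s1 * (if a + 1 ∈ I then (-1 : ℤ) ^ ent M (a + 1) else 1) :=
      subSign_succ M I hnd (a + 1)
    have hm : 1 ≤ ent M (a + 1) := ent_pos M hpos (a + 1) (by omega) (by omega)
    set m := ent M (a + 1) with hmdef
    by_cases hmem : a + 1 ∈ I
    · rw [hs2, if_pos hmem]
      unfold block
      rw [if_pos hmem]
      rw [sc_altSeq_mul s1 (subSign_eq_or M I (a + 1)) (m - 1)]
      rw [List.length_map, length_altSeq]
      have hcast : ((m - 1 : ℕ) : ℤ) = (m : ℤ) - 1 := by omega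
      have hpow : (-1 : ℤ) ^ (m - 1) = -(-1 : ℤ) ^ m := by
        have : m = (m - 1) + 1 := by omega
        rw [this, pow_succ]
        rw [show m - 1 + 1 - 1 = m - 1 by omega]
        ring
      have hsq : (-1 : ℤ) ^ m * (-1 : ℤ) ^ m = 1 := by
        rcases neg_one_pow_eq_or ℤ m with h | h <;> rw [h] <;> ring
      rw [hcast, hpow, if_pos hmem, pow_zero]
      have h2m : (-1 : ℤ) ^ (m * 2) = 1 := by
        rw [pow_mul, pow_two]; exact hsq
      linear_combination (-s1 * S) * h2m
    · rw [hs2, if_neg hmem]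
      unfold block
      rw [if_neg hmem]
      simp only [List.map_cons, List.map_nil, sc_cons, sc_nil, List.length_cons,
        List.length_nil]
      have hx : (0 : ℤ) < (m : ℤ) + (if a + 1 - 1 ∈ I then 1 else 0)
          + (if a + 1 + 1 ∈ I then 1 else 0) := by
        have : (1 : ℤ) ≤ (m : ℤ) := by exact_mod_cast hm
        split_ifs <;> linarith
      have hsgn : Int.sign (s1 * ((m : ℤ) + (if a + 1 - 1 ∈ I then 1 else 0)
          + (if a + 1 + 1 ∈ I then 1 else 0))) = s1 := by
        rw [Int.sign_mul, sign_pm s1 (subSign_eq_or M I (a + 1)),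
          Int.sign_eq_one_iff_pos.mpr hx, mul_one]
      rw [show s1 * ((m : ℤ) + (if a + 1 - 1 ∈ I then 1 else 0)
          + (if a + 1 + 1 ∈ I then 1 else 0))
        = s1 * ((m : ℤ) + (if a + 1 - 1 ∈ I then 1 else 0)
          + (if a + 1 + 1 ∈ I then 1 else 0)) from rfl, hsgn]
      rw [if_neg hmem, pow_zero, pow_one]
      ring

lemma allowable_sorted {M I : List ℕ} (hI : IsAllowable M I) :
    I.Pairwise (· < ·) := by
  have h : I.Chain' (· < ·) := hI.1.imp (fun h => by omega)
  exact List.isChain_iff_pairwise.mp h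

lemma allowable_nodup {M I : List ℕ} (hI : IsAllowable M I) : I.Nodup :=
  (allowable_sorted hI).nodup

lemma sum_ite_eq_sgnSum (M I : List ℕ) (hI : IsAllowable M I) :
    ∑ j ∈ Finset.range M.length,
      (if j + 1 ∈ I then (-1 : ℤ) ^ (j + 1) * (ent M (j + 1) : ℤ) else 0)
      = sgnSum M I := by
  classical
  rw [← Finset.sum_filter]
  have himg : Finset.image (· + 1) ((Finset.range M.length).filter (fun j => j + 1 ∈ I))
      = I.toFinset := by
    ext i
    simp only [Finset.mem_image, Finset.mem_filter, Finset.mem_range, List.mem_toFinset]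
    constructor
    · rintro ⟨j, ⟨_, hj⟩, rfl⟩; exact hj
    · intro hi
      obtain ⟨h1, h2⟩ := hI.2.1 i hi
      exact ⟨i - 1, ⟨by omega, by rwa [show i - 1 + 1 = i by omega]⟩, by omega⟩
  have := Finset.sum_image (f := fun i => (-1 : ℤ) ^ i * (ent M i : ℤ))
      (g := (· + 1)) (s := (Finset.range M.length).filter (fun j => j + 1 ∈ I))
      (by intro x _ y _ h; simpa using h)
  rw [himg] at this
  rw [← this, List.sum_toFinset _ (allowable_nodup hI)]
  rfl

lemma sc_MI (M I : List ℕ) (hpos : ∀ m ∈ M, 0 < m) (hI : IsAllowable M I) :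
    sc (MI M I) = (if Even M.length then 0 else 1) + sgnSum M I := by
  classical
  have hnd := allowable_nodup hI
  have hsub1 : subSign M I 1 = 1 := by
    unfold subSign
    have : I.filter (fun i' => decide (i' < 1)) = [] := by
      rw [List.filter_eq_nil_iff]
      intro x hx
      have := (hI.2.1 x hx).1
      simp; omega
    rw [this]; rfl
  have hglue := sc_glue M I hpos hnd M.length 0 (by omega)
  have e0 : (fun idx => (block M I (0 + idx + 1)).map (fun q => subSign M I (0 + idx + 1) * q))
      = (fun idx => (block M I (idx + 1)).map (fun q => subSign M I (idx + 1) * q)) := by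
    funext idx; rw [Nat.zero_add]
  rw [e0, hsub1, one_mul] at hglue
  rw [MI, hglue]
  have : ((List.range M.length).map (fun j =>
      (-1 : ℤ) ^ j * (if 0 + 1 + j ∈ I then 1 - (ent M (0 + 1 + j) : ℤ) else 1))).sum
      = ∑ j ∈ Finset.range M.length,
        ((-1 : ℤ) ^ j + (if j + 1 ∈ I then (-1 : ℤ) ^ (j + 1) * (ent M (j + 1) : ℤ) else 0)) := by
    rw [show ∑ j ∈ Finset.range M.length,
        ((-1 : ℤ) ^ j + (if j + 1 ∈ I then (-1 : ℤ) ^ (j + 1) * (ent M (j + 1) : ℤ) else 0))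
      = ((List.range M.length).map (fun j =>
        (-1 : ℤ) ^ j + (if j + 1 ∈ I then (-1 : ℤ) ^ (j + 1) * (ent M (j + 1) : ℤ) else 0))).sum
      from rfl]
    congr 1
    apply List.map_congr_left
    intro j _
    rw [show 0 + 1 + j = j + 1 by omega]
    by_cases hj : j + 1 ∈ I
    · rw [if_pos hj, if_pos hj, pow_succ]; ring
    · rw [if_neg hj, if_neg hj]; ring
  rw [this, Finset.sum_add_distrib, neg_one_geom_sum, sum_ite_eq_sgnSum M I hI]

lemma sum_take_ent (M : List ℕ) (n : ℕ) (hn : n ≤ M.length) :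
    (M.take n).sum = ∑ j ∈ Finset.range n, ent M (j + 1) := by
  induction n with
  | zero => simp
  | succ n ih =>
    rw [List.sum_take_succ M n (by omega), Finset.sum_range_succ, ih (by omega)]
    congr 1
    unfold ent
    rw [show n + 1 - 1 = n by omega, List.getD_eq_getElem M 0 (by omega)]

lemma sgnSum_ne (M : List ℕ) (hsuper : SuperInc M) {I J : List ℕ}
    (hI : IsAllowable M I) (hJ : IsAllowable M J) (hne : I ≠ J) :
    sgnSum M I ≠ sgnSum M J := by
  classical
  intro heq
  set f : ℕ → ℤ := fun i => (-1 : ℤ) ^ i * (ent M i : ℤ) with hf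
  set A := I.toFinset with hA
  set B := J.toFinset with hB
  have hsumA : A.sum f = sgnSum M I := List.sum_toFinset f (allowable_nodup hI)
  have hsumB : B.sum f = sgnSum M J := List.sum_toFinset f (allowable_nodup hJ)
  have hAB : A ≠ B := by
    intro h
    apply hne
    exact List.Perm.eq_of_pairwise (fun a b _ _ h1 h2 => absurd (h1.trans h2) (lt_irrefl a))
      (allowable_sorted hI) (allowable_sorted hJ)
      (List.perm_of_nodup_nodup_toFinset_eq (allowable_nodup hI) (allowable_nodup hJ) h)
  set C := (A \ B) ∪ (B \ A) with hC
  have hCne : C.Nonempty := by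
    by_contra h
    rw [Finset.not_nonempty_iff_eq_empty, hC, Finset.union_eq_empty,
      Finset.sdiff_eq_empty_iff_subset, Finset.sdiff_eq_empty_iff_subset] at h
    exact hAB (Finset.Subset.antisymm h.1 h.2)
  set d : ℕ → ℤ := fun i => if i ∈ A then f i else -f i with hd
  have hdisj : Disjoint (A \ B) (B \ A) := disjoint_sdiff_sdiff
  have hsum0 : ∑ i ∈ C, d i = 0 := by
    rw [hC, Finset.sum_union hdisj]
    have e1 : ∑ i ∈ A \ B, d i = ∑ i ∈ A \ B, f i := by
      apply Finset.sum_congr rfl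
      intro i hi
      rw [hd]
      simp only [if_pos (Finset.mem_sdiff.mp hi).1]
    have e2 : ∑ i ∈ B \ A, d i = -∑ i ∈ B \ A, f i := by
      rw [← Finset.sum_neg_distrib]
      apply Finset.sum_congr rfl
      intro i hi
      rw [hd]
      simp only [if_neg (Finset.mem_sdiff.mp hi).2]
    rw [e1, e2]
    have e3 : A \ B = A \ (A ∩ B) := (Finset.sdiff_inter_self_left A B).symm
    have e4 : B \ A = B \ (B ∩ A) := (Finset.sdiff_inter_self_left B A).symm
    rw [e3, e4, Finset.sum_sdiff_eq_sub Finset.inter_subset_left,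
      Finset.sum_sdiff_eq_sub Finset.inter_subset_left, Finset.inter_comm B A,
      hsumA, hsumB, heq]
    ring
  set istar := C.max' hCne with histar
  have hstarC : istar ∈ C := C.max'_mem hCne
  have hmemAB : ∀ i ∈ C, 1 ≤ i ∧ i ≤ M.length := by
    intro i hi
    rw [hC, Finset.mem_union, Finset.mem_sdiff, Finset.mem_sdiff] at hi
    rcases hi with ⟨hi, _⟩ | ⟨hi, _⟩
    · exact hI.2.1 i (List.mem_toFinset.mp hi)
    · exact hJ.2.1 i (List.mem_toFinset.mp hi)
  obtain ⟨hstar1, hstar2⟩ := hmemAB istar hstarC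
  have habs : ∀ i, |d i| = (ent M i : ℤ) := by
    intro i
    have hfa : |f i| = (ent M i : ℤ) := by
      rw [hf]
      simp only []
      rw [abs_mul, abs_pow, abs_neg, abs_one, one_pow, one_mul, abs_of_nonneg (by positivity)]
    by_cases hiA : i ∈ A <;> simp [hd, hiA, hfa, abs_neg]
  have hpeel : d istar = -∑ i ∈ C.erase istar, d i := by
    have := Finset.add_sum_erase C d hstarC
    linarith [this, hsum0]
  have hsubset : C.erase istar ⊆ (Finset.range (istar - 1)).image (· + 1) := by
    intro i hi
    rw [Finset.mem_erase] at hi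
    obtain ⟨hine, hiC⟩ := hi
    have h1 := (hmemAB i hiC).1
    have hle := C.le_max' i hiC
    rw [Finset.mem_image]
    exact ⟨i - 1, Finset.mem_range.mpr (by omega), by omega⟩
  have himg : ∑ i ∈ (Finset.range (istar - 1)).image (· + 1), (ent M i : ℤ)
      = ∑ j ∈ Finset.range (istar - 1), (ent M (j + 1) : ℤ) := by
    apply Finset.sum_image
    intro x _ y _ h
    simpa using h
  have hbound : (ent M istar : ℤ) ≤ ∑ j ∈ Finset.range (istar - 1), (ent M (j + 1) : ℤ) := by
    calc (ent M istar : ℤ) = |d istar| := (habs istar).symm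
      _ = |∑ i ∈ C.erase istar, d i| := by rw [hpeel, abs_neg]
      _ ≤ ∑ i ∈ C.erase istar, |d i| := Finset.abs_sum_le_sum_abs _ _
      _ = ∑ i ∈ C.erase istar, (ent M i : ℤ) := by
          exact Finset.sum_congr rfl (fun i _ => habs i)
      _ ≤ ∑ i ∈ (Finset.range (istar - 1)).image (· + 1), (ent M i : ℤ) := by
          exact Finset.sum_le_sum_of_subset_of_nonneg hsubset
            (fun i _ _ => by positivity)
      _ = _ := himg
  have hsup := hsuper istar hstar1 hstar2
  rw [sum_take_ent M (istar - 1) (by omega)] at hsup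
  have : ((∑ j ∈ Finset.range (istar - 1), ent M (j + 1) : ℕ) : ℤ)
      < (ent M istar : ℤ) := by exact_mod_cast hsup
  push_cast at this
  omega


/-- Theorem 4.4 of the paper (numerical form): for a super-increasing tuple `M`
of positive integers with last entry `≥ 2`, distinct allowable sub-tuples give
distinct values of `n⁺ - n⁻`, hence no repeated boundary slopes. -/
theorem nplus_sub_nminus_injective_of_superInc (M : List ℕ)
    (hpos : ∀ m ∈ M, 0 < m) (hsuper : SuperInc M) (hlast : 2 ≤ M.getLastD 0)
    (I J : List ℕ) (hI : IsAllowable M I) (hJ : IsAllowable M J) (hne : I ≠ J) :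
    (nplus (MI M I) : ℤ) - (nminus (MI M I) : ℤ) ≠
      (nplus (MI M J) : ℤ) - (nminus (MI M J) : ℤ) := by
  intro h
  have h1 : sc (MI M I) = sc (MI M J) := by
    rw [← nplus_sub_nminus, ← nplus_sub_nminus]
    exact h
  rw [sc_MI M I hpos hI, sc_MI M J hpos hJ] at h1
  exact sgnSum_ne M hsuper hI hJ hne (by linarith)
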